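/- arXiv:2003.06912 — 2 statements merged into one kernel-verified Lean document; each statement's English description precedes it below -/
import Mathlib

section
/- (Boundary version of the convergence lemma, used in Step 3 of the proof of Theorem 2.1.) Let (Σ, μ) be a finite measure space and let s_* ≥ 0 be a constant. Suppose {vⁿ} ⊂ L²(Σ; ℝ³) is a sequence converging strongly in L²(Σ; ℝ³) to some v, and set zⁿ := s_* vⁿ/(|vⁿ| + 1/n) a.e. in Σ. If zⁿ converges weakly in L²(Σ; ℝ³) to some z, then (|z| − s_*)⁺ + | |v| z − s_* v | = 0 a.e. in Σ. -/
open MeasureTheory Filter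
open scoped RealInnerProductSpace Topology ENNReal

/-- `ℝ³` with the Euclidean inner product. -/
abbrev V3 := EuclideanSpace ℝ (Fin 3)


private lemma integrable_inner_of_memL2 {S : Type*} [MeasurableSpace S] {μ : Measure S}
    {E : Type*} [NormedAddCommGroup E] [InnerProductSpace ℝ E]
    {f g : S → E} (hf : MemLp f 2 μ) (hg : MemLp g 2 μ) :
    Integrable (fun x => (inner ℝ (f x) (g x) : ℝ)) μ := by
  have h := MeasureTheory.L2.integrable_inner (𝕜 := ℝ) (hf.toLp f) (hg.toLp g)
  refine h.congr ?_
  filter_upwards [hf.coeFn_toLp, hg.coeFn_toLp] with x h1 h2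
  rw [h1, h2]

private lemma integrable_mul_of_memL2 {S : Type*} [MeasurableSpace S] {μ : Measure S}
    {f g : S → ℝ} (hf : MemLp f 2 μ) (hg : MemLp g 2 μ) :
    Integrable (fun x => f x * g x) μ := by
  have := integrable_inner_of_memL2 hf hg
  simpa [RCLike.inner_apply, mul_comm] using this

private lemma continuous_proj_aux {E : Type*} [NormedAddCommGroup E] [NormedSpace ℝ E]
    {s : ℝ} (hs : 0 ≤ s) :
    Continuous (fun y : E => ((max (‖y‖ - s) 0) / ‖y‖) • y) := by
  rw [continuous_iff_continuousAt]
  intro y0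
  by_cases h : y0 = 0
  · subst h
    have h0 : ((max (‖(0:E)‖ - s) 0) / ‖(0:E)‖) • (0:E) = 0 := smul_zero _
    rw [ContinuousAt, h0]
    apply squeeze_zero_norm (a := fun y : E => ‖y‖) _ tendsto_norm_zero
    intro y
    by_cases hy : y = 0
    · simp [hy]
    · rw [norm_smul, Real.norm_eq_abs, abs_of_nonneg (div_nonneg (le_max_right _ _) (norm_nonneg _)),
        div_mul_cancel₀ _ (norm_ne_zero_iff.mpr hy)]
      exact max_le (by linarith [norm_nonneg y]) (norm_nonneg y)
  · have hcA : ContinuousAt (fun y : E => ((max (‖y‖ - s) 0) / ‖y‖)) y0 := by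
      apply ContinuousAt.div
      · exact ((continuous_norm.sub continuous_const).max continuous_const).continuousAt
      · exact continuous_norm.continuousAt
      · exact norm_ne_zero_iff.mpr h
    exact hcA.smul continuousAt_id


set_option maxHeartbeats 1000000 in
/-- Boundary version of the convergence lemma.  On a finite measure space `(Σ, μ)` with
constant `s_* ≥ 0`: if `vⁿ → v` strongly in `L²(Σ; ℝ³)`, `zⁿ := s_* vⁿ/(|vⁿ| + 1/n)` a.e.,
and `zⁿ ⇀ z` weakly in `L²(Σ; ℝ³)`, then `(|z| − s_*)⁺ + ||v| z − s_* v| = 0` a.e.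
(Sequences are indexed by `n : ℕ`, the regularization parameter being `1/(n+1)`.) -/
theorem boundary_convergence_lemma
    {S : Type*} [MeasurableSpace S] (μ : Measure S) [IsFiniteMeasure μ]
    (s : ℝ) (hs : 0 ≤ s)
    (v : ℕ → S → V3) (vlim : S → V3) (z : ℕ → S → V3) (zlim : S → V3)
    (hv_mem : ∀ n, MemLp (v n) 2 μ) (hvlim_mem : MemLp vlim 2 μ)
    (hz_mem : ∀ n, MemLp (z n) 2 μ) (hzlim_mem : MemLp zlim 2 μ)
    (hv_strong : Tendsto (fun n => eLpNorm (v n - vlim) 2 μ) atTop (𝓝 0))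
    (hzn : ∀ n : ℕ, ∀ᵐ x ∂μ, z n x = (s / (‖v n x‖ + 1 / (n + 1))) • v n x)
    (hz_weak : ∀ w : S → V3, MemLp w 2 μ →
      Tendsto (fun n => ∫ x, ⟪z n x, w x⟫ ∂μ) atTop (𝓝 (∫ x, ⟪zlim x, w x⟫ ∂μ))) :
    ∀ᵐ x ∂μ, max (‖zlim x‖ - s) 0 + ‖(‖vlim x‖) • zlim x - s • vlim x‖ = 0 := by
  have hvlim_sm := hvlim_mem.aestronglyMeasurable
  have hzlim_sm := hzlim_mem.aestronglyMeasurable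
  have hpos : ∀ x : S, (0:ℝ) < 1 + ‖vlim x‖ := fun x => by positivity
  -- a.e. uniform bound ‖z n x‖ ≤ s
  have hzb : ∀ n : ℕ, ∀ᵐ x ∂μ, ‖z n x‖ ≤ s := by
    intro n
    filter_upwards [hzn n] with x hx
    have hd : (0:ℝ) < ‖v n x‖ + 1 / ((n:ℝ) + 1) := by positivity
    rw [hx, norm_smul, Real.norm_eq_abs, abs_of_nonneg (div_nonneg hs hd.le),
      div_mul_eq_mul_div, div_le_iff₀ hd]
    have h1 : (0:ℝ) < 1 / ((n:ℝ) + 1) := by positivity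
    nlinarith [norm_nonneg (v n x), mul_nonneg hs h1.le]
  ------------------------------------------------------------------
  -- Part 1 : (‖zlim‖ - s)⁺ = 0 a.e.
  ------------------------------------------------------------------
  set m1 : S → ℝ := fun x => max (‖zlim x‖ - s) 0 with hm1def
  have hm1_nonneg : ∀ x, 0 ≤ m1 x := fun x => le_max_right _ _
  have hm1_le : ∀ x, m1 x ≤ ‖zlim x‖ := fun x =>
    max_le (by linarith [norm_nonneg (zlim x)]) (norm_nonneg _)
  set w1 : S → V3 := fun x => ((max (‖zlim x‖ - s) 0) / ‖zlim x‖) • zlim x with hw1def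
  have hw1_sm : AEStronglyMeasurable w1 μ :=
    (continuous_proj_aux (E := V3) hs).comp_aestronglyMeasurable hzlim_sm
  have hw1_norm : ∀ x, ‖w1 x‖ = m1 x := by
    intro x
    by_cases h : zlim x = 0
    · simp only [hw1def, hm1def, h, smul_zero, norm_zero, norm_zero, zero_sub]
      rw [max_eq_right (by linarith : -s ≤ 0)]
    · rw [hw1def, norm_smul, Real.norm_eq_abs,
        abs_of_nonneg (div_nonneg (le_max_right _ _) (norm_nonneg _)),
        div_mul_cancel₀ _ (norm_ne_zero_iff.mpr h)]
  have hw1_mem : MemLp w1 2 μ :=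
    hzlim_mem.of_le hw1_sm (Eventually.of_forall fun x => by
      rw [hw1_norm x]; exact (hm1_le x).trans le_rfl)
  have hm1_mem : MemLp m1 2 μ :=
    (memLp_congr_ae (Eventually.of_forall hw1_norm)).mp hw1_mem.norm
  -- the inequality ∫ ⟪z n, w1⟫ ≤ ∫ s * m1
  have hIle : ∀ n, (∫ x, ⟪z n x, w1 x⟫ ∂μ) ≤ ∫ x, s * m1 x ∂μ := by
    intro n
    apply integral_mono_ae (integrable_inner_of_memL2 (hz_mem n) hw1_mem)
      ((hm1_mem.integrable one_le_two).const_mul s)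
    filter_upwards [hzb n] with x hx
    calc ⟪z n x, w1 x⟫ ≤ ‖z n x‖ * ‖w1 x‖ := real_inner_le_norm _ _
      _ ≤ s * m1 x := by
          rw [hw1_norm x]; exact mul_le_mul_of_nonneg_right hx (hm1_nonneg x)
  have hlim_le : (∫ x, ⟪zlim x, w1 x⟫ ∂μ) ≤ ∫ x, s * m1 x ∂μ :=
    le_of_tendsto (hz_weak w1 hw1_mem) (Eventually.of_forall hIle)
  have hinner_w1 : ∀ x, ⟪zlim x, w1 x⟫ = m1 x * ‖zlim x‖ := by
    intro x
    by_cases h : zlim x = 0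
    · simp [hw1def, hm1def, h]
    · have hn : ‖zlim x‖ ≠ 0 := norm_ne_zero_iff.mpr h
      rw [hw1def, real_inner_smul_right, real_inner_self_eq_norm_mul_norm, hm1def]
      field_simp
  rw [show (∫ x, ⟪zlim x, w1 x⟫ ∂μ) = ∫ x, m1 x * ‖zlim x‖ ∂μ by
    exact integral_congr_ae (Eventually.of_forall hinner_w1)] at hlim_le
  have hint_m1z : Integrable (fun x => m1 x * ‖zlim x‖) μ :=
    integrable_mul_of_memL2 hm1_mem hzlim_mem.norm
  have hint_sm1 : Integrable (fun x => s * m1 x) μ :=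
    (hm1_mem.integrable one_le_two).const_mul s
  have hint_m1sq : Integrable (fun x => m1 x * m1 x) μ :=
    integrable_mul_of_memL2 hm1_mem hm1_mem
  have hsq_eq : ∀ x, m1 x * ‖zlim x‖ - s * m1 x = m1 x * m1 x := by
    intro x
    rcases le_or_gt (‖zlim x‖ - s) 0 with h | h
    · have : m1 x = 0 := max_eq_right h
      rw [this]; ring
    · have : m1 x = ‖zlim x‖ - s := max_eq_left h.le
      rw [this]; ring
  have hsq_le : (∫ x, m1 x * m1 x ∂μ) ≤ 0 := by
    have := integral_sub hint_m1z hint_sm1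
    have h2 : (∫ x, (m1 x * ‖zlim x‖ - s * m1 x) ∂μ) ≤ 0 := by
      rw [this]; linarith
    calc (∫ x, m1 x * m1 x ∂μ)
        = ∫ x, (m1 x * ‖zlim x‖ - s * m1 x) ∂μ :=
          integral_congr_ae (Eventually.of_forall fun x => (hsq_eq x).symm)
      _ ≤ 0 := h2
  have hsq_zero : (∫ x, m1 x * m1 x ∂μ) = 0 :=
    le_antisymm hsq_le (integral_nonneg fun x => mul_self_nonneg _)
  have part1 : ∀ᵐ x ∂μ, m1 x = 0 := by
    have := (integral_eq_zero_iff_of_nonneg (fun x => mul_self_nonneg (m1 x)) hint_m1sq).mp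
      hsq_zero
    filter_upwards [this] with x hx
    exact mul_self_eq_zero.mp hx
  ------------------------------------------------------------------
  -- Part 2 : ‖vlim‖ • zlim = s • vlim a.e.
  ------------------------------------------------------------------
  obtain ⟨ns, hns_mono, hns_ae⟩ :=
    (tendstoInMeasure_of_tendsto_eLpNorm (p := 2) (by norm_num)
      (fun n => (hv_mem n).aestronglyMeasurable) hvlim_sm hv_strong).exists_seq_tendsto_ae
  set m2 : S → ℝ := fun x => ‖vlim x‖ / (1 + ‖vlim x‖) with hm2def
  set g : S → V3 := fun x => (s / (1 + ‖vlim x‖)) • vlim x with hgdef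
  have hm2_nonneg : ∀ x, 0 ≤ m2 x := fun x => div_nonneg (norm_nonneg _) (hpos x).le
  have hm2_le_one : ∀ x, m2 x ≤ 1 := fun x =>
    (div_le_one (hpos x)).mpr (by linarith)
  have hm2_sm : AEStronglyMeasurable m2 μ := by
    have hc : Continuous (fun y : V3 => ‖y‖ / (1 + ‖y‖)) :=
      continuous_norm.div (continuous_const.add continuous_norm) (fun y => by positivity)
    exact hc.comp_aestronglyMeasurable hvlim_sm
  have hg_sm : AEStronglyMeasurable g μ := by
    have hc : Continuous (fun y : V3 => (s / (1 + ‖y‖)) • y) := by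
      refine Continuous.smul (f := fun y : V3 => s / (1 + ‖y‖)) (g := fun y : V3 => y) ?_ continuous_id
      exact continuous_const.div (continuous_const.add continuous_norm) (fun y => by positivity)
    exact hc.comp_aestronglyMeasurable hvlim_sm
  have hg_bound : ∀ x, ‖g x‖ ≤ s := by
    intro x
    rw [hgdef]
    simp only
    rw [norm_smul, Real.norm_eq_abs, abs_of_nonneg (div_nonneg hs (hpos x).le),
      div_mul_eq_mul_div, div_le_iff₀ (hpos x)]
    nlinarith [norm_nonneg (vlim x)]
  have hg_mem : MemLp g 2 μ :=
    (memLp_const (μ := μ) (p := 2) s).of_le hg_sm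
      (Eventually.of_forall fun x => by
        simpa [Real.norm_eq_abs, abs_of_nonneg hs] using hg_bound x)
  -- pointwise convergence of m2 • z (ns i) to g along the subsequence
  have hz_all : ∀ᵐ x ∂μ, ∀ n : ℕ, z n x = (s / (‖v n x‖ + 1 / ((n:ℝ) + 1))) • v n x :=
    (ae_all_iff).mpr hzn
  have hεlim : Tendsto (fun i => 1 / ((ns i : ℝ) + 1)) atTop (𝓝 0) := by
    simp only [one_div]
    exact (tendsto_atTop_add_const_right atTop 1
      (tendsto_natCast_atTop_atTop.comp hns_mono.tendsto_atTop)).inv_tendsto_atTop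
  have hptwise : ∀ᵐ x ∂μ, Tendsto (fun i => m2 x • z (ns i) x) atTop (𝓝 (g x)) := by
    filter_upwards [hns_ae, hz_all] with x hvx hzx
    by_cases h0 : vlim x = 0
    · have hm0 : m2 x = 0 := by simp [hm2def, h0]
      have hg0 : g x = 0 := by simp [hgdef, h0]
      simp only [hm0, zero_smul, hg0]
      exact tendsto_const_nhds
    · have hc : (0:ℝ) < ‖vlim x‖ := norm_pos_iff.mpr h0
      have hd : Tendsto (fun i => ‖v (ns i) x‖ + 1 / ((ns i : ℝ) + 1)) atTop
          (𝓝 (‖vlim x‖)) := by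
        simpa using hvx.norm.add hεlim
      have hscal : Tendsto (fun i => s / (‖v (ns i) x‖ + 1 / ((ns i : ℝ) + 1))) atTop
          (𝓝 (s / ‖vlim x‖)) := tendsto_const_nhds.div hd hc.ne'
      have h1 : Tendsto (fun i => z (ns i) x) atTop (𝓝 ((s / ‖vlim x‖) • vlim x)) := by
        have : (fun i => z (ns i) x)
            = fun i => (s / (‖v (ns i) x‖ + 1 / ((ns i : ℝ) + 1))) • v (ns i) x := by
          funext i; exact hzx (ns i)
        rw [this]
        exact hscal.smul hvx
      have h2 := h1.const_smul (m2 x)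
      have heq : m2 x • ((s / ‖vlim x‖) • vlim x) = g x := by
        rw [smul_smul, hgdef]
        simp only
        congr 1
        rw [hm2def]
        field_simp
      rw [heq] at h2
      exact h2
  -- identification of the weak limit
  have hkey : ∀ w : S → V3, MemLp w 2 μ →
      (∫ x, ⟪zlim x, m2 x • w x⟫ ∂μ) = ∫ x, ⟪g x, w x⟫ ∂μ := by
    intro w hw
    have hmw_mem : MemLp (fun x => m2 x • w x) 2 μ :=
      hw.of_le (hm2_sm.smul hw.aestronglyMeasurable)
        (Eventually.of_forall fun x => by
          rw [norm_smul, Real.norm_eq_abs, abs_of_nonneg (hm2_nonneg x)]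
          calc m2 x * ‖w x‖ ≤ 1 * ‖w x‖ :=
                mul_le_mul_of_nonneg_right (hm2_le_one x) (norm_nonneg _)
            _ = ‖w x‖ := one_mul _)
    have t1 : Tendsto (fun i => ∫ x, ⟪z (ns i) x, m2 x • w x⟫ ∂μ) atTop
        (𝓝 (∫ x, ⟪zlim x, m2 x • w x⟫ ∂μ)) :=
      (hz_weak _ hmw_mem).comp hns_mono.tendsto_atTop
    have t2 : Tendsto (fun i => ∫ x, ⟪z (ns i) x, m2 x • w x⟫ ∂μ) atTop
        (𝓝 (∫ x, ⟪g x, w x⟫ ∂μ)) := by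
      apply tendsto_integral_of_dominated_convergence (bound := fun x => s * ‖w x‖)
      · intro i
        exact (hz_mem (ns i)).aestronglyMeasurable.inner
          (hm2_sm.smul hw.aestronglyMeasurable)
      · exact (hw.integrable one_le_two).norm.const_mul s
      · intro i
        filter_upwards [hzb (ns i)] with x hx
        calc ‖⟪z (ns i) x, m2 x • w x⟫‖
            ≤ ‖z (ns i) x‖ * ‖m2 x • w x‖ := norm_inner_le_norm _ _
          _ ≤ s * ‖w x‖ := by
              rw [norm_smul, Real.norm_eq_abs, abs_of_nonneg (hm2_nonneg x)]
              have h1 : m2 x * ‖w x‖ ≤ ‖w x‖ := by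
                calc m2 x * ‖w x‖ ≤ 1 * ‖w x‖ :=
                      mul_le_mul_of_nonneg_right (hm2_le_one x) (norm_nonneg _)
                  _ = ‖w x‖ := one_mul _
              have h2 : (0:ℝ) ≤ m2 x * ‖w x‖ := mul_nonneg (hm2_nonneg x) (norm_nonneg _)
              nlinarith [norm_nonneg (z (ns i) x)]
      · filter_upwards [hptwise] with x hx
        have heq : ∀ i, ⟪z (ns i) x, m2 x • w x⟫ = ⟪m2 x • z (ns i) x, w x⟫ := by
          intro i
          rw [real_inner_smul_right, real_inner_smul_left]
        simp only [heq]
        exact hx.inner tendsto_const_nhds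
    exact tendsto_nhds_unique t1 t2
  -- apply with the test function w0 = m2 • zlim - g
  set w0 : S → V3 := fun x => m2 x • zlim x - g x with hw0def
  have hmz_mem : MemLp (fun x => m2 x • zlim x) 2 μ :=
    hzlim_mem.of_le (hm2_sm.smul hzlim_sm)
      (Eventually.of_forall fun x => by
        rw [norm_smul, Real.norm_eq_abs, abs_of_nonneg (hm2_nonneg x)]
        calc m2 x * ‖zlim x‖ ≤ 1 * ‖zlim x‖ :=
              mul_le_mul_of_nonneg_right (hm2_le_one x) (norm_nonneg _)
          _ = ‖zlim x‖ := one_mul _)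
  have hw0_mem : MemLp w0 2 μ := hmz_mem.sub hg_mem
  have hself : (∫ x, ⟪w0 x, w0 x⟫ ∂μ) = 0 := by
    have hsplit : ∀ x, ⟪w0 x, w0 x⟫ = ⟪zlim x, m2 x • w0 x⟫ - ⟪g x, w0 x⟫ := by
      intro x
      rw [hw0def]
      simp only
      rw [real_inner_smul_right, ← real_inner_smul_left, ← inner_sub_left]
    calc (∫ x, ⟪w0 x, w0 x⟫ ∂μ)
        = ∫ x, (⟪zlim x, m2 x • w0 x⟫ - ⟪g x, w0 x⟫) ∂μ :=
          integral_congr_ae (Eventually.of_forall hsplit)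
      _ = (∫ x, ⟪zlim x, m2 x • w0 x⟫ ∂μ) - ∫ x, ⟪g x, w0 x⟫ ∂μ := by
          apply integral_sub
          · have hmw0 : MemLp (fun x => m2 x • w0 x) 2 μ :=
              hw0_mem.of_le (hm2_sm.smul hw0_mem.aestronglyMeasurable)
                (Eventually.of_forall fun x => by
                  rw [norm_smul, Real.norm_eq_abs, abs_of_nonneg (hm2_nonneg x)]
                  calc m2 x * ‖w0 x‖ ≤ 1 * ‖w0 x‖ :=
                        mul_le_mul_of_nonneg_right (hm2_le_one x) (norm_nonneg _)
                    _ = ‖w0 x‖ := one_mul _)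
            exact integrable_inner_of_memL2 hzlim_mem hmw0
          · exact integrable_inner_of_memL2 hg_mem hw0_mem
      _ = 0 := by rw [hkey w0 hw0_mem]; ring
  have part2 : ∀ᵐ x ∂μ, (‖vlim x‖) • zlim x = s • vlim x := by
    have hnn : ∀ x, (0:ℝ) ≤ ⟪w0 x, w0 x⟫ := fun x => real_inner_self_nonneg
    have := (integral_eq_zero_iff_of_nonneg hnn
      (integrable_inner_of_memL2 hw0_mem hw0_mem)).mp hself
    filter_upwards [this] with x hx
    have hw0x : w0 x = 0 := by
      have : ⟪w0 x, w0 x⟫ = 0 := hx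
      exact inner_self_eq_zero.mp this
    have heq2 : m2 x • zlim x = g x := by
      have := sub_eq_zero.mp hw0x
      exact this
    have hc := (hpos x).ne'
    calc (‖vlim x‖) • zlim x
        = (1 + ‖vlim x‖) • (m2 x • zlim x) := by
          rw [smul_smul]; congr 1; rw [hm2def]; field_simp
      _ = (1 + ‖vlim x‖) • g x := by rw [heq2]
      _ = s • vlim x := by
          rw [hgdef]; simp only; rw [smul_smul]; congr 1; field_simp
  ------------------------------------------------------------------
  filter_upwards [part1, part2] with x h1 h2
  rw [show (‖vlim x‖) • zlim x - s • vlim x = 0 from sub_eq_zero.mpr h2, norm_zero, add_zero]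
  exact h1
end

section
/- (Intermediate variational inequality (3.18) in the proof of Proposition 3.1.) Under the hypotheses of the first part of Proposition 3.1 — namely: (U, μ) a finite measure space, p_s ∈ L²(U) measurable, Zⁿ = τ(p_fⁿ) Dⁿ/(|Dⁿ| + 1/n) a.e. with τ(p) := (p_s − p)⁺, Zⁿ ⇀ Z and Dⁿ ⇀ D weakly in L²(U; M₃), p_fⁿ → p_f strongly in L²(U) and a.e., and limsup_{n→∞} ∫_U Zⁿ : Dⁿ dμ ≤ ∫_U Z : D dμ — the limit objects satisfy: for every A ∈ L²(U; M₃) with A ≠ 0 a.e. in U, ∫_U ( Z − τ(p_f) A/|A| ) : (D − A) dμ ≥ 0. -/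
open MeasureTheory Filter
open scoped RealInnerProductSpace Topology ENNReal

section helpers
variable {U : Type*} [MeasurableSpace U] {μ : Measure U}
variable {E : Type*} [NormedAddCommGroup E] [InnerProductSpace ℝ E]

lemma memL2_integrable_inner {f g : U → E} (hf : MemLp f 2 μ) (hg : MemLp g 2 μ) :
    Integrable (fun x => ⟪f x, g x⟫) μ := by
  have h := MeasureTheory.L2.integrable_inner (𝕜 := ℝ) (hf.toLp f) (hg.toLp g)
  refine h.congr ?_
  filter_upwards [hf.coeFn_toLp, hg.coeFn_toLp] with x h1 h2
  rw [h1, h2]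

lemma integral_inner_eq_L2 {f g : U → E} (hf : MemLp f 2 μ) (hg : MemLp g 2 μ) :
    ∫ x, ⟪f x, g x⟫ ∂μ = ⟪hf.toLp f, hg.toLp g⟫ := by
  rw [MeasureTheory.L2.inner_def]
  refine integral_congr_ae ?_
  filter_upwards [hf.coeFn_toLp, hg.coeFn_toLp] with x h1 h2
  rw [h1, h2]

lemma abs_integral_inner_le {f g : U → E} (hf : MemLp f 2 μ) (hg : MemLp g 2 μ) :
    |∫ x, ⟪f x, g x⟫ ∂μ| ≤ (eLpNorm f 2 μ).toReal * (eLpNorm g 2 μ).toReal := by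
  rw [integral_inner_eq_L2 hf hg, ← Lp.norm_toLp f hf, ← Lp.norm_toLp g hg]
  exact abs_real_inner_le_norm _ _

lemma weak_conv_bounded [CompleteSpace E] {D : ℕ → U → E} (hD_mem : ∀ n, MemLp (D n) 2 μ)
    (h : ∀ A : U → E, MemLp A 2 μ → ∃ l : ℝ,
      Tendsto (fun n => ∫ x, ⟪D n x, A x⟫ ∂μ) atTop (𝓝 l)) :
    ∃ C : ℝ, ∀ n, (eLpNorm (D n) 2 μ).toReal ≤ C := by
  set g : ℕ → (Lp E 2 μ) →L[ℝ] ℝ := fun n => innerSL ℝ ((hD_mem n).toLp (D n)) with hg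
  have hpt : ∀ f : Lp E 2 μ, ∃ C, ∀ n, ‖g n f‖ ≤ C := by
    intro f
    obtain ⟨l, hl⟩ := h f (Lp.memLp f)
    have heq : ∀ n, g n f = ∫ x, ⟪D n x, f x⟫ ∂μ := by
      intro n
      have := integral_inner_eq_L2 (hD_mem n) (Lp.memLp f)
      simp only [hg, innerSL_apply_apply, this]
      congr 1
      exact (Lp.toLp_coeFn f (Lp.memLp f)).symm
    have hl' : Tendsto (fun n => ‖g n f‖) atTop (𝓝 ‖l‖) := by
      simp_rw [heq]; exact hl.norm
    obtain ⟨C, hC⟩ := hl'.bddAbove_range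
    exact ⟨C, fun n => hC (Set.mem_range_self n)⟩
  obtain ⟨C, hC⟩ := banach_steinhaus hpt
  refine ⟨C, fun n => ?_⟩
  have := hC n
  rwa [hg, innerSL_apply_norm, Lp.norm_toLp] at this

lemma pointwise_key {t d a e p q : ℝ} (ht : 0 ≤ t) (hd : 0 ≤ d) (ha : 0 ≤ a) (he : 0 < e)
    (hp : p ≤ d * a) (hq : q ≤ d) :
    0 ≤ e * t + (t / (d + e)) * d ^ 2 - (t / (d + e)) * p - t * q + t * a := by
  have hde : 0 < d + e := by linarith
  set c := t / (d + e) with hc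
  have hc0 : 0 ≤ c := div_nonneg ht hde.le
  have hct : t = c * (d + e) := by rw [hc, div_mul_cancel₀ t hde.ne']
  rw [hct]
  nlinarith [mul_le_mul_of_nonneg_left hp hc0,
    mul_le_mul_of_nonneg_left hq (mul_nonneg hc0 hde.le),
    mul_nonneg hc0 (mul_nonneg he.le he.le),
    mul_nonneg (mul_nonneg hc0 he.le) ha]

end helpers

/-- `M₃`: the space of 3×3 real matrices with the Frobenius inner product. -/
abbrev M3 := EuclideanSpace ℝ (Fin 3 × Fin 3)

/-- Intermediate variational inequality (3.18) in the proof of Proposition 3.1: under the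
hypotheses of the first part of the convergence lemma, the limit objects satisfy
`∫ (Z − τ(p_f) A/|A|) : (D − A) dμ ≥ 0` for every `A ∈ L²(U; M₃)` with `A ≠ 0` a.e.
(Sequences are indexed by `n : ℕ`, the regularization parameter being `1/(n+1)`.) -/
theorem intermediate_variational_inequality
    {U : Type*} [MeasurableSpace U] (μ : Measure U) [IsFiniteMeasure μ]
    (ps : U → ℝ) (hps_meas : Measurable ps) (hps_mem : MemLp ps 2 μ)
    (Z D : ℕ → U → M3) (pf : ℕ → U → ℝ)
    (Zlim Dlim : U → M3) (pflim : U → ℝ)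
    (hZ_mem : ∀ n, MemLp (Z n) 2 μ) (hD_mem : ∀ n, MemLp (D n) 2 μ)
    (hpf_mem : ∀ n, MemLp (pf n) 2 μ)
    (hZlim_mem : MemLp Zlim 2 μ) (hDlim_mem : MemLp Dlim 2 μ)
    (hpflim_mem : MemLp pflim 2 μ)
    (hZn : ∀ n : ℕ, ∀ᵐ x ∂μ,
      Z n x = (max (ps x - pf n x) 0 / (‖D n x‖ + 1 / (n + 1))) • D n x)
    (hZ_weak : ∀ A : U → M3, MemLp A 2 μ →
      Tendsto (fun n => ∫ x, ⟪Z n x, A x⟫ ∂μ) atTop (𝓝 (∫ x, ⟪Zlim x, A x⟫ ∂μ)))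
    (hD_weak : ∀ A : U → M3, MemLp A 2 μ →
      Tendsto (fun n => ∫ x, ⟪D n x, A x⟫ ∂μ) atTop (𝓝 (∫ x, ⟪Dlim x, A x⟫ ∂μ)))
    (hpf_strong : Tendsto (fun n => eLpNorm (pf n - pflim) 2 μ) atTop (𝓝 0))
    (hpf_ae : ∀ᵐ x ∂μ, Tendsto (fun n => pf n x) atTop (𝓝 (pflim x)))
    (hlimsup : limsup (fun n => ∫ x, ⟪Z n x, D n x⟫ ∂μ) atTop
      ≤ ∫ x, ⟪Zlim x, Dlim x⟫ ∂μ) :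
    ∀ A : U → M3, MemLp A 2 μ → (∀ᵐ x ∂μ, A x ≠ 0) →
      0 ≤ ∫ x, ⟪Zlim x - (max (ps x - pflim x) 0 / ‖A x‖) • A x, Dlim x - A x⟫ ∂μ := by
  intro A hA hAne
  set τn : ℕ → U → ℝ := fun n x => max (ps x - pf n x) 0 with hτn_def
  set τ : U → ℝ := fun x => max (ps x - pflim x) 0 with hτ_def
  set B : U → M3 := fun x => ‖A x‖⁻¹ • A x with hB_def
  set e : ℕ → ℝ := fun n => 1 / (n + 1) with he_def
  have he_pos : ∀ n : ℕ, 0 < e n := fun n => by positivity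
  have hτn_nonneg : ∀ n x, 0 ≤ τn n x := fun n x => le_max_right _ _
  have hτ_nonneg : ∀ x, 0 ≤ τ x := fun x => le_max_right _ _
  have hB_norm : ∀ x, ‖B x‖ ≤ 1 := by
    intro x
    rw [hB_def]
    simp only [norm_smul, norm_inv, norm_norm]
    rcases eq_or_ne (A x) 0 with h | h
    · simp [h]
    · rw [inv_mul_cancel₀ (norm_ne_zero_iff.mpr h)]
  -- MemLp facts
  have hmax_mem : ∀ (f : U → ℝ), MemLp f 2 μ → MemLp (fun x => max (f x) 0) 2 μ := by
    intro f hf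
    refine MemLp.of_le hf ((hf.1.aemeasurable.max aemeasurable_const).aestronglyMeasurable) ?_
    refine Eventually.of_forall fun x => ?_
    rw [Real.norm_eq_abs, abs_of_nonneg (le_max_right _ _), Real.norm_eq_abs]
    exact max_le (le_abs_self _) (abs_nonneg _)
  have hτn_mem : ∀ n, MemLp (τn n) 2 μ := fun n => hmax_mem _ (hps_mem.sub (hpf_mem n))
  have hτ_mem : MemLp τ 2 μ := hmax_mem _ (hps_mem.sub hpflim_mem)
  have hB_meas : AEStronglyMeasurable B μ :=
    (hA.1.norm.aemeasurable.inv.aestronglyMeasurable).smul hA.1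
  have hsmulB_mem : ∀ (f : U → ℝ), MemLp f 2 μ → MemLp (fun x => f x • B x) 2 μ := by
    intro f hf
    refine MemLp.of_le hf (hf.1.smul hB_meas) ?_
    refine Eventually.of_forall fun x => ?_
    rw [norm_smul]
    calc ‖f x‖ * ‖B x‖ ≤ ‖f x‖ * 1 := by
          exact mul_le_mul_of_nonneg_left (hB_norm x) (norm_nonneg _)
      _ = ‖f x‖ := mul_one _
  have hτB_mem : MemLp (fun x => τ x • B x) 2 μ := hsmulB_mem _ hτ_mem
  have hτnB_mem : ∀ n, MemLp (fun x => τn n x • B x) 2 μ := fun n => hsmulB_mem _ (hτn_mem n)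
  -- strong L² convergence of τn to τ
  have hτ_sub_mem : ∀ n, MemLp (fun x => τn n x - τ x) 2 μ :=
    fun n => (hτn_mem n).sub hτ_mem
  have hτ_sub_le : ∀ n, eLpNorm (fun x => τn n x - τ x) 2 μ ≤ eLpNorm (pf n - pflim) 2 μ := by
    intro n
    refine eLpNorm_mono fun x => ?_
    simp only [Pi.sub_apply, Real.norm_eq_abs, hτn_def, hτ_def]
    calc |max (ps x - pf n x) 0 - max (ps x - pflim x) 0|
        ≤ |(ps x - pf n x) - (ps x - pflim x)| := abs_max_sub_max_le_abs _ _ _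
      _ = |pf n x - pflim x| := by rw [abs_sub_comm]; ring_nf
  set Nn : ℕ → ℝ := fun n => (eLpNorm (fun x => τn n x - τ x) 2 μ).toReal with hNn_def
  have hNn_nonneg : ∀ n, 0 ≤ Nn n := fun n => ENNReal.toReal_nonneg
  have hN0 : Tendsto Nn atTop (𝓝 0) := by
    have h1 : Tendsto (fun n => eLpNorm (fun x => τn n x - τ x) 2 μ) atTop (𝓝 0) :=
      tendsto_of_tendsto_of_tendsto_of_le_of_le tendsto_const_nhds hpf_strong
        (fun n => zero_le) hτ_sub_le
    have h2 := (ENNReal.tendsto_toReal (by simp)).comp h1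
    exact h2
  obtain ⟨T, hT⟩ := hN0.bddAbove_range
  have hT' : ∀ n, Nn n ≤ T := fun n => hT (Set.mem_range_self n)
  -- triangle inequality bound on ‖τn‖₂
  have htri : ∀ n, (eLpNorm (τn n) 2 μ).toReal ≤ Nn n + (eLpNorm τ 2 μ).toReal := by
    intro n
    have h1 : (hτn_mem n).toLp (τn n)
        = (hτ_sub_mem n).toLp (fun x => τn n x - τ x) + hτ_mem.toLp τ := by
      have h2 : (hτ_sub_mem n).toLp (fun x => τn n x - τ x)
          = (hτn_mem n).toLp (τn n) - hτ_mem.toLp τ := MemLp.toLp_sub (hτn_mem n) hτ_mem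
      rw [h2, sub_add_cancel]
    calc (eLpNorm (τn n) 2 μ).toReal = ‖(hτn_mem n).toLp (τn n)‖ := (Lp.norm_toLp _ _).symm
      _ ≤ ‖(hτ_sub_mem n).toLp (fun x => τn n x - τ x)‖ + ‖hτ_mem.toLp τ‖ := by
          rw [h1]; exact norm_add_le _ _
      _ = Nn n + (eLpNorm τ 2 μ).toReal := by rw [Lp.norm_toLp, Lp.norm_toLp]
  -- L² boundedness of D n
  obtain ⟨CD, hCD⟩ : ∃ C : ℝ, ∀ n, (eLpNorm (D n) 2 μ).toReal ≤ C :=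
    weak_conv_bounded hD_mem (fun A hA => ⟨_, hD_weak A hA⟩)
  have hCD0 : 0 ≤ CD := le_trans ENNReal.toReal_nonneg (hCD 0)
  -- eLpNorm of (τn - τ) • B
  have hsubB_le : ∀ n, (eLpNorm (fun x => (τn n x - τ x) • B x) 2 μ).toReal ≤ Nn n := by
    intro n
    refine ENNReal.toReal_mono (hτ_sub_mem n).2.ne ?_
    refine eLpNorm_mono fun x => ?_
    rw [norm_smul]
    calc ‖τn n x - τ x‖ * ‖B x‖ ≤ ‖τn n x - τ x‖ * 1 :=
          mul_le_mul_of_nonneg_left (hB_norm x) (norm_nonneg _)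
      _ = ‖τn n x - τ x‖ := mul_one _
  -- generic convergence of the mixed terms
  have hgen : ∀ (W : ℕ → U → M3), (∀ n, MemLp (W n) 2 μ) → ∀ (CW : ℝ),
      (∀ n, (eLpNorm (W n) 2 μ).toReal ≤ CW) →
      Tendsto (fun n => ∫ x, ⟪τn n x • B x, W n x⟫ ∂μ - ∫ x, ⟪τ x • B x, W n x⟫ ∂μ)
        atTop (𝓝 0) := by
    intro W hW CW hCW
    have hCW0 : 0 ≤ CW := le_trans ENNReal.toReal_nonneg (hCW 0)
    refine squeeze_zero_norm (fun n => ?_) (by simpa using hN0.mul_const CW)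
    have h1 : ∫ x, ⟪τn n x • B x, W n x⟫ ∂μ - ∫ x, ⟪τ x • B x, W n x⟫ ∂μ
        = ∫ x, ⟪(τn n x - τ x) • B x, W n x⟫ ∂μ := by
      rw [← integral_sub (memL2_integrable_inner (hτnB_mem n) (hW n))
        (memL2_integrable_inner hτB_mem (hW n))]
      refine integral_congr_ae (Eventually.of_forall fun x => ?_)
      simp only [sub_smul, inner_sub_left]
    rw [h1, Real.norm_eq_abs]
    have hsubB_mem : MemLp (fun x => (τn n x - τ x) • B x) 2 μ :=
      hsmulB_mem _ (hτ_sub_mem n)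
    calc |∫ x, ⟪(τn n x - τ x) • B x, W n x⟫ ∂μ|
        ≤ (eLpNorm (fun x => (τn n x - τ x) • B x) 2 μ).toReal * (eLpNorm (W n) 2 μ).toReal :=
          abs_integral_inner_le hsubB_mem (hW n)
      _ ≤ Nn n * CW :=
          mul_le_mul (hsubB_le n) (hCW n) ENNReal.toReal_nonneg (hNn_nonneg n)
  -- pointwise bound on ‖Z n‖
  have hZ_bound : ∀ n, ∀ᵐ x ∂μ, ‖Z n x‖ ≤ τn n x := by
    intro n
    filter_upwards [hZn n] with x hx
    have hx' : Z n x = (τn n x / (‖D n x‖ + e n)) • D n x := hx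
    have h2 : (0:ℝ) < ‖D n x‖ + e n := by positivity
    rw [hx', norm_smul, Real.norm_eq_abs,
      abs_of_nonneg (div_nonneg (hτn_nonneg n x) h2.le), div_mul_eq_mul_div, div_le_iff₀ h2]
    nlinarith [hτn_nonneg n x, norm_nonneg (D n x), he_pos n]
  -- the key integral inequality
  have key : ∀ n, ∫ x, ⟪Z n x, A x⟫ ∂μ + ∫ x, ⟪τn n x • B x, D n x⟫ ∂μ
      - ∫ x, ⟪τn n x • B x, A x⟫ ∂μ - e n * ∫ x, τn n x ∂μ
      ≤ ∫ x, ⟪Z n x, D n x⟫ ∂μ := by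
    intro n
    have hpt : ∀ᵐ x ∂μ, 0 ≤ e n * τn n x + ⟪Z n x, D n x⟫ - ⟪Z n x, A x⟫
        - ⟪τn n x • B x, D n x⟫ + ⟪τn n x • B x, A x⟫ := by
      filter_upwards [hZn n, hAne] with x hzx hax
      have hzx' : Z n x = (τn n x / (‖D n x‖ + e n)) • D n x := hzx
      have hBA : ⟪B x, A x⟫ = ‖A x‖ := by
        rw [hB_def]
        simp only [real_inner_smul_left]
        rw [real_inner_self_eq_norm_mul_norm]
        field_simp
      have hBD : ⟪B x, D n x⟫ ≤ ‖D n x‖ := by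
        calc ⟪B x, D n x⟫ ≤ |⟪B x, D n x⟫| := le_abs_self _
          _ ≤ ‖B x‖ * ‖D n x‖ := abs_real_inner_le_norm _ _
          _ ≤ 1 * ‖D n x‖ := mul_le_mul_of_nonneg_right (hB_norm x) (norm_nonneg _)
          _ = ‖D n x‖ := one_mul _
      have hDA : ⟪D n x, A x⟫ ≤ ‖D n x‖ * ‖A x‖ :=
        (le_abs_self _).trans (abs_real_inner_le_norm _ _)
      have hkey := pointwise_key (t := τn n x) (d := ‖D n x‖) (a := ‖A x‖)
        (e := e n) (p := ⟪D n x, A x⟫) (q := ⟪B x, D n x⟫)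
        (hτn_nonneg n x) (norm_nonneg _) (norm_nonneg _) (he_pos n) hDA hBD
      have e1 : ⟪(τn n x / (‖D n x‖ + e n)) • D n x, D n x⟫
          = (τn n x / (‖D n x‖ + e n)) * ‖D n x‖ ^ 2 := by
        rw [real_inner_smul_left, real_inner_self_eq_norm_sq]
      have e2 : ⟪(τn n x / (‖D n x‖ + e n)) • D n x, A x⟫
          = (τn n x / (‖D n x‖ + e n)) * ⟪D n x, A x⟫ := real_inner_smul_left _ _ _
      have e3 : ⟪τn n x • B x, D n x⟫ = τn n x * ⟪B x, D n x⟫ := real_inner_smul_left _ _ _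
      have e4 : ⟪τn n x • B x, A x⟫ = τn n x * ‖A x‖ := by
        rw [real_inner_smul_left, hBA]
      rw [hzx', e1, e2, e3, e4]
      linarith [hkey]
    have hint := integral_nonneg_of_ae hpt
    have i1 : Integrable (fun x => τn n x) μ := (hτn_mem n).integrable one_le_two
    have i2 := memL2_integrable_inner (hZ_mem n) (hD_mem n)
    have i3 := memL2_integrable_inner (hZ_mem n) hA
    have i4 := memL2_integrable_inner (hτnB_mem n) (hD_mem n)
    have i5 := memL2_integrable_inner (hτnB_mem n) hA
    have j2 : Integrable (fun x => e n * τn n x + ⟪Z n x, D n x⟫) μ :=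
      (i1.const_mul (e n)).add i2
    have j3 : Integrable (fun x => e n * τn n x + ⟪Z n x, D n x⟫ - ⟪Z n x, A x⟫) μ :=
      j2.sub i3
    have j4 : Integrable (fun x => e n * τn n x + ⟪Z n x, D n x⟫ - ⟪Z n x, A x⟫
        - ⟪τn n x • B x, D n x⟫) μ := j3.sub i4
    rw [integral_add j4 i5, integral_sub j3 i4, integral_sub j2 i3,
      integral_add (i1.const_mul (e n)) i2, MeasureTheory.integral_const_mul] at hint
    linarith
  -- limits of the three linear terms
  have ha_lim : Tendsto (fun n => ∫ x, ⟪Z n x, A x⟫ ∂μ) atTop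
      (𝓝 (∫ x, ⟪Zlim x, A x⟫ ∂μ)) := hZ_weak A hA
  have hd_lim : Tendsto (fun n => ∫ x, ⟪τ x • B x, D n x⟫ ∂μ) atTop
      (𝓝 (∫ x, ⟪τ x • B x, Dlim x⟫ ∂μ)) := by
    have h0 := hD_weak (fun x => τ x • B x) hτB_mem
    have h1 : ∫ x, ⟪Dlim x, τ x • B x⟫ ∂μ = ∫ x, ⟪τ x • B x, Dlim x⟫ ∂μ :=
      integral_congr_ae (Eventually.of_forall fun x => real_inner_comm _ _)
    rw [h1] at h0
    exact h0.congr fun n =>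
      integral_congr_ae (Eventually.of_forall fun x => real_inner_comm _ _)
  have hb_lim : Tendsto (fun n => ∫ x, ⟪τn n x • B x, D n x⟫ ∂μ) atTop
      (𝓝 (∫ x, ⟪τ x • B x, Dlim x⟫ ∂μ)) := by
    have h0 := (hgen D hD_mem CD hCD).add hd_lim
    simp only [zero_add] at h0
    exact h0.congr fun n => by ring
  have hc_lim : Tendsto (fun n => ∫ x, ⟪τn n x • B x, A x⟫ ∂μ) atTop
      (𝓝 (∫ x, ⟪τ x • B x, A x⟫ ∂μ)) := by
    have h0 := (hgen (fun _ => A) (fun _ => hA) ((eLpNorm A 2 μ).toReal)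
      (fun _ => le_rfl)).add (tendsto_const_nhds (x := ∫ x, ⟪τ x • B x, A x⟫ ∂μ)
        (f := atTop (α := ℕ)))
    simp only [zero_add] at h0
    exact h0.congr fun n => by ring
  -- the error term tends to zero
  have hT0 : 0 ≤ T := le_trans (hNn_nonneg 0) (hT' 0)
  have hS1 : ∀ n, |∫ x, τn n x ∂μ| ≤ (eLpNorm (τn n) 2 μ).toReal
      * (eLpNorm (fun _ : U => (1:ℝ)) 2 μ).toReal := by
    intro n
    have h := abs_integral_inner_le (μ := μ) (hτn_mem n) (memLp_const (1:ℝ))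
    simpa [RCLike.inner_apply] using h
  have hS0 : 0 ≤ (eLpNorm (fun _ : U => (1:ℝ)) 2 μ).toReal := ENNReal.toReal_nonneg
  have hτnorm_bdd : ∀ n, |∫ x, τn n x ∂μ|
      ≤ (T + (eLpNorm τ 2 μ).toReal) * (eLpNorm (fun _ : U => (1:ℝ)) 2 μ).toReal := by
    intro n
    refine (hS1 n).trans (mul_le_mul_of_nonneg_right ?_ hS0)
    exact (htri n).trans (by linarith [hT' n])
  have het : Tendsto (fun n => e n * ∫ x, τn n x ∂μ) atTop (𝓝 0) := by
    have hE : Tendsto e atTop (𝓝 0) := tendsto_one_div_add_atTop_nhds_zero_nat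
    have hg : Tendsto (fun n => e n * ((T + (eLpNorm τ 2 μ).toReal)
        * (eLpNorm (fun _ : U => (1:ℝ)) 2 μ).toReal)) atTop (𝓝 0) := by
      have := hE.mul_const ((T + (eLpNorm τ 2 μ).toReal)
        * (eLpNorm (fun _ : U => (1:ℝ)) 2 μ).toReal)
      rwa [zero_mul] at this
    refine squeeze_zero_norm (fun n => ?_) hg
    rw [Real.norm_eq_abs, abs_mul, abs_of_pos (he_pos n)]
    exact mul_le_mul_of_nonneg_left (hτnorm_bdd n) (he_pos n).le
  -- uniform bound on the quadratic term
  have hG_bdd : ∀ n, |∫ x, ⟪Z n x, D n x⟫ ∂μ| ≤ (T + (eLpNorm τ 2 μ).toReal) * CD := by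
    intro n
    refine (abs_integral_inner_le (hZ_mem n) (hD_mem n)).trans ?_
    have hZn_le : (eLpNorm (Z n) 2 μ).toReal ≤ T + (eLpNorm τ 2 μ).toReal := by
      have h1 : eLpNorm (Z n) 2 μ ≤ eLpNorm (τn n) 2 μ := by
        refine eLpNorm_mono_ae ?_
        filter_upwards [hZ_bound n] with x hx
        rwa [Real.norm_eq_abs, abs_of_nonneg (hτn_nonneg n x)]
      exact (ENNReal.toReal_mono (hτn_mem n).2.ne h1).trans
        ((htri n).trans (by linarith [hT' n]))
    exact mul_le_mul hZn_le (hCD n) ENNReal.toReal_nonneg (by linarith [ENNReal.toReal_nonneg (a := eLpNorm τ 2 μ)])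
  -- pass to the limit
  have hL : Tendsto (fun n => ∫ x, ⟪Z n x, A x⟫ ∂μ + ∫ x, ⟪τn n x • B x, D n x⟫ ∂μ
      - ∫ x, ⟪τn n x • B x, A x⟫ ∂μ - e n * ∫ x, τn n x ∂μ) atTop
      (𝓝 (∫ x, ⟪Zlim x, A x⟫ ∂μ + ∫ x, ⟪τ x • B x, Dlim x⟫ ∂μ
        - ∫ x, ⟪τ x • B x, A x⟫ ∂μ)) := by
    have := ((ha_lim.add hb_lim).sub hc_lim).sub het
    simpa using this
  have hbdd_le : IsBoundedUnder (· ≤ ·) atTop (fun n => ∫ x, ⟪Z n x, D n x⟫ ∂μ) :=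
    isBoundedUnder_of ⟨(T + (eLpNorm τ 2 μ).toReal) * CD, fun n => (abs_le.1 (hG_bdd n)).2⟩
  have hbdd_ge : IsBoundedUnder (· ≥ ·) atTop (fun n => ∫ x, ⟪Z n x, D n x⟫ ∂μ) :=
    isBoundedUnder_of ⟨-((T + (eLpNorm τ 2 μ).toReal) * CD),
      fun n => (abs_le.1 (hG_bdd n)).1⟩
  have hliminf : ∫ x, ⟪Zlim x, A x⟫ ∂μ + ∫ x, ⟪τ x • B x, Dlim x⟫ ∂μ
      - ∫ x, ⟪τ x • B x, A x⟫ ∂μ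
      ≤ liminf (fun n => ∫ x, ⟪Z n x, D n x⟫ ∂μ) atTop := by
    rw [← hL.liminf_eq]
    exact liminf_le_liminf (Eventually.of_forall key)
      hL.isBoundedUnder_ge hbdd_le.isCoboundedUnder_ge
  have hfinal : ∫ x, ⟪Zlim x, A x⟫ ∂μ + ∫ x, ⟪τ x • B x, Dlim x⟫ ∂μ
      - ∫ x, ⟪τ x • B x, A x⟫ ∂μ ≤ ∫ x, ⟪Zlim x, Dlim x⟫ ∂μ :=
    hliminf.trans ((liminf_le_limsup hbdd_le hbdd_ge).trans hlimsup)
  -- rewrite the goal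
  have k1 := memL2_integrable_inner hZlim_mem hDlim_mem
  have k2 := memL2_integrable_inner hZlim_mem hA
  have k3 := memL2_integrable_inner hτB_mem hDlim_mem
  have k4 := memL2_integrable_inner hτB_mem hA
  have hgoal_eq : ∫ x, ⟪Zlim x - (max (ps x - pflim x) 0 / ‖A x‖) • A x, Dlim x - A x⟫ ∂μ
      = ∫ x, ⟪Zlim x, Dlim x⟫ ∂μ - ∫ x, ⟪Zlim x, A x⟫ ∂μ
        - (∫ x, ⟪τ x • B x, Dlim x⟫ ∂μ - ∫ x, ⟪τ x • B x, A x⟫ ∂μ) := by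
    have h1 : ∀ x, ⟪Zlim x - (max (ps x - pflim x) 0 / ‖A x‖) • A x, Dlim x - A x⟫
        = ⟪Zlim x, Dlim x⟫ - ⟪Zlim x, A x⟫
          - (⟪τ x • B x, Dlim x⟫ - ⟪τ x • B x, A x⟫) := by
      intro x
      have hx : (max (ps x - pflim x) 0 / ‖A x‖) • A x = τ x • B x := by
        rw [div_eq_mul_inv, mul_smul]
      rw [hx, inner_sub_left, inner_sub_right, inner_sub_right]
    rw [integral_congr_ae (Eventually.of_forall h1)]
    have j1 : Integrable (fun x => ⟪Zlim x, Dlim x⟫ - ⟪Zlim x, A x⟫) μ := k1.sub k2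
    have j2 : Integrable (fun x => ⟪τ x • B x, Dlim x⟫ - ⟪τ x • B x, A x⟫) μ := k3.sub k4
    rw [integral_sub j1 j2, integral_sub k1 k2, integral_sub k3 k4]
  rw [hgoal_eq]
  linarith [hfinal]
end
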